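/- Let G be a graph obtained as the icosahedron graph (12 vertices, 5-regular, planar) possibly with each vertex v blown up into a nonempty clique X_v (adjacent blown-up classes fully joined, nonadjacent ones fully non-joined). If χ(G) > ω(G), then there exist adjacent vertices x, y in G with χ(G \ {x,y}) ≥ χ(G) − 1. -/

import Mathlib

open SimpleGraph

/-- The edges of the icosahedron on vertices `v_0, …, v_11`. -/
def icoEdges : List (Fin 12 × Fin 12) :=
  [(1,2),(2,3),(3,4),(4,5),(5,6),(6,7),(7,8),(8,9),(9,10),(10,1),
   (1,3),(2,4),(3,5),(4,6),(5,7),(6,8),(7,9),(8,10),(9,1),(10,2),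
   (0,1),(0,3),(0,5),(0,7),(0,9),
   (11,2),(11,4),(11,6),(11,8),(11,10)]

/-- The icosahedron graph. -/
def icosahedron : SimpleGraph (Fin 12) where
  Adj a b := a ≠ b ∧ ((a, b) ∈ icoEdges ∨ (b, a) ∈ icoEdges)
  symm := ⟨fun a b h => ⟨h.1.symm, h.2.symm⟩⟩
  loopless := ⟨fun a h => h.1 rfl⟩

instance : DecidableRel icosahedron.Adj := fun a b =>
  decidable_of_iff (a ≠ b ∧ ((a, b) ∈ icoEdges ∨ (b, a) ∈ icoEdges)) Iff.rfl

/-- The icosahedron has no independent set of size 4. -/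
lemma ico_noStable4 : ∀ a b c d : Fin 12,
    ¬(a ≠ b ∧ a ≠ c ∧ a ≠ d ∧ b ≠ c ∧ b ≠ d ∧ c ≠ d ∧
      ¬ icosahedron.Adj a b ∧ ¬ icosahedron.Adj a c ∧ ¬ icosahedron.Adj a d ∧
      ¬ icosahedron.Adj b c ∧ ¬ icosahedron.Adj b d ∧ ¬ icosahedron.Adj c d) := by decide

/-- Extract four distinct elements from a finset of size at least 4. -/
lemma four_of_card {β : Type*} [DecidableEq β] (s : Finset β) (h : 4 ≤ s.card) :
    ∃ a ∈ s, ∃ b ∈ s, ∃ c ∈ s, ∃ d ∈ s,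
      a ≠ b ∧ a ≠ c ∧ a ≠ d ∧ b ≠ c ∧ b ≠ d ∧ c ≠ d := by
  obtain ⟨a, ha⟩ := Finset.card_pos.mp (show 0 < s.card by omega)
  have h1 : 3 ≤ (s.erase a).card := by
    rw [Finset.card_erase_of_mem ha]; omega
  obtain ⟨b, hb⟩ := Finset.card_pos.mp (show 0 < (s.erase a).card by omega)
  have h2 : 2 ≤ ((s.erase a).erase b).card := by
    rw [Finset.card_erase_of_mem hb]; omega
  obtain ⟨c, hc⟩ := Finset.card_pos.mp (show 0 < ((s.erase a).erase b).card by omega)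
  have h3 : 1 ≤ (((s.erase a).erase b).erase c).card := by
    rw [Finset.card_erase_of_mem hc]; omega
  obtain ⟨d, hd⟩ :=
    Finset.card_pos.mp (show 0 < (((s.erase a).erase b).erase c).card by omega)
  obtain ⟨hdc, hd'⟩ := Finset.mem_erase.mp hd
  obtain ⟨hdb, hd''⟩ := Finset.mem_erase.mp hd'
  obtain ⟨hda, hds⟩ := Finset.mem_erase.mp hd''
  obtain ⟨hcb, hc'⟩ := Finset.mem_erase.mp hc
  obtain ⟨hca, hcs⟩ := Finset.mem_erase.mp hc'
  obtain ⟨hba, hbs⟩ := Finset.mem_erase.mp hb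
  exact ⟨a, ha, b, hbs, c, hcs, d, hds,
    fun h => hba h.symm, fun h => hca h.symm, fun h => hda h.symm,
    fun h => hcb h.symm, fun h => hdb h.symm, fun h => hdc h.symm⟩

/-- In a thickening of the icosahedron every independent set has at most 3 vertices. -/
lemma stable_card_le_three {V : Type*} [Fintype V] [DecidableEq V] (G : SimpleGraph V)
    (f : V → Fin 12)
    (hadj : ∀ u v : V, G.Adj u v ↔ u ≠ v ∧ (f u = f v ∨ icosahedron.Adj (f u) (f v)))
    (s : Finset V) (hs : ∀ a ∈ s, ∀ b ∈ s, a ≠ b → ¬ G.Adj a b) : s.card ≤ 3 := by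
  by_contra hcon
  obtain ⟨a, ha, b, hb, c, hc, d, hd, hab, hac, had, hbc, hbd, hcd⟩ :=
    four_of_card s (by omega)
  have key : ∀ p ∈ s, ∀ q ∈ s, p ≠ q →
      f p ≠ f q ∧ ¬ icosahedron.Adj (f p) (f q) := by
    intro p hp q hq hpq
    have hnadj := hs p hp q hq hpq
    constructor
    · exact fun hf => hnadj ((hadj p q).mpr ⟨hpq, Or.inl hf⟩)
    · exact fun hic => hnadj ((hadj p q).mpr ⟨hpq, Or.inr hic⟩)
  obtain ⟨e1, e1'⟩ := key a ha b hb hab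
  obtain ⟨e2, e2'⟩ := key a ha c hc hac
  obtain ⟨e3, e3'⟩ := key a ha d hd had
  obtain ⟨e4, e4'⟩ := key b hb c hc hbc
  obtain ⟨e5, e5'⟩ := key b hb d hd hbd
  obtain ⟨e6, e6'⟩ := key c hc d hd hcd
  exact ico_noStable4 (f a) (f b) (f c) (f d)
    ⟨e1, e2, e3, e4, e5, e6, e1', e2', e3', e4', e5', e6'⟩

/-- Counting bound: a `(k-2)`-coloring of `G` minus two vertices, with all color classes
of size at most 3, bounds the number of vertices. -/
lemma count_bound {V : Type*} [Fintype V] [DecidableEq V] (G : SimpleGraph V)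
    (f : V → Fin 12)
    (hadj : ∀ u v : V, G.Adj u v ↔ u ≠ v ∧ (f u = f v ∨ icosahedron.Adj (f u) (f v)))
    (k : ℕ) (x y : V)
    (hcol : (G.induce (({x, y} : Set V)ᶜ)).Colorable (k - 2)) :
    Fintype.card V ≤ 3 * (k - 2) + 2 := by
  classical
  obtain ⟨c0⟩ := hcol
  have hmem : ∀ {z : V}, z ≠ x → z ≠ y → z ∈ (({x, y} : Set V)ᶜ) := by
    intro z h1 h2
    simp only [Set.mem_compl_iff, Set.mem_insert_iff, Set.mem_singleton_iff]
    rintro (h | h)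
    · exact h1 h
    · exact h2 h
  set T : Finset V := Finset.univ.filter (fun z => z ≠ x ∧ z ≠ y) with hT
  have hcardT : Fintype.card V ≤ T.card + 2 := by
    have hsub : (Finset.univ : Finset V) ⊆ T ∪ {x, y} := by
      intro z _
      by_cases hzx : z = x
      · exact Finset.mem_union_right _ (by simp [hzx])
      by_cases hzy : z = y
      · exact Finset.mem_union_right _ (by simp [hzy])
      · exact Finset.mem_union_left _ (by simp [hT, hzx, hzy])
    calc Fintype.card V = (Finset.univ : Finset V).card := Finset.card_univ.symm
      _ ≤ (T ∪ {x, y}).card := Finset.card_le_card hsub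
      _ ≤ T.card + ({x, y} : Finset V).card := Finset.card_union_le _ _
      _ ≤ T.card + 2 := by
          have := Finset.card_insert_le x ({y} : Finset V)
          simp only [Finset.card_singleton] at this
          omega
  rcases Nat.eq_zero_or_pos (k - 2) with hk0 | hkpos
  · have hTempty : T = ∅ := by
      rw [Finset.eq_empty_iff_forall_notMem]
      intro z hz
      rw [hT, Finset.mem_filter] at hz
      have hc := c0 ⟨z, hmem hz.2.1 hz.2.2⟩
      rw [hk0] at hc
      exact hc.elim0
    rw [hTempty] at hcardT
    simp only [Finset.card_empty] at hcardT
    omega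
  · let F : V → ℕ := fun z =>
      if h : z ≠ x ∧ z ≠ y then ((c0 ⟨z, hmem h.1 h.2⟩ : Fin (k - 2)) : ℕ) else 0
    have hF : ∀ (z : V) (h1 : z ≠ x) (h2 : z ≠ y),
        F z = ((c0 ⟨z, hmem h1 h2⟩ : Fin (k - 2)) : ℕ) := by
      intro z h1 h2
      exact dif_pos ⟨h1, h2⟩
    have hFT : ∀ z ∈ T, F z ∈ Finset.range (k - 2) := by
      intro z hz
      rw [hT, Finset.mem_filter] at hz
      rw [hF z hz.2.1 hz.2.2, Finset.mem_range]
      exact (c0 ⟨z, hmem hz.2.1 hz.2.2⟩).isLt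
    have hsum := Finset.card_eq_sum_card_fiberwise hFT
    have hfib : ∀ j ∈ Finset.range (k - 2),
        (T.filter (fun z => F z = j)).card ≤ 3 := by
      intro j _
      apply stable_card_le_three G f hadj
      intro p hp q hq hpq hAdj
      rw [Finset.mem_filter, hT, Finset.mem_filter] at hp hq
      obtain ⟨⟨_, hpx, hpy⟩, hpj⟩ := hp
      obtain ⟨⟨_, hqx, hqy⟩, hqj⟩ := hq
      rw [hF p hpx hpy] at hpj
      rw [hF q hqx hqy] at hqj
      have hadjind : (G.induce (({x, y} : Set V)ᶜ)).Adj
          ⟨p, hmem hpx hpy⟩ ⟨q, hmem hqx hqy⟩ := hAdj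
      exact c0.valid hadjind (Fin.val_injective (by omega))
    have : T.card ≤ 3 * (k - 2) := by
      rw [hsum]
      calc ∑ j ∈ Finset.range (k - 2), (T.filter (fun z => F z = j)).card
          ≤ (Finset.range (k - 2)).card • 3 :=
            Finset.sum_le_card_nsmul _ _ _ hfib
        _ = 3 * (k - 2) := by rw [Finset.card_range, smul_eq_mul]; ring
    omega

/-- The key inequality: if removing the two ends of any edge drops the chromatic number
by two, then for each edge `uv` of the icosahedron (with common neighbors `c, c'`),
the total weight of `u, v, c, c'` is at least `k`. -/
lemma star_ineq {V : Type*} [Fintype V] [DecidableEq V] (G : SimpleGraph V)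
    (f : V → Fin 12) (hsurj : Function.Surjective f)
    (hadj : ∀ u v : V, G.Adj u v ↔ u ≠ v ∧ (f u = f v ∨ icosahedron.Adj (f u) (f v)))
    (k : ℕ) (hk2 : 2 ≤ k) (hchrom : G.chromaticNumber = (k : ℕ∞))
    (hno : ∀ x y : V, G.Adj x y → (G.induce (({x, y} : Set V)ᶜ)).Colorable (k - 2))
    (u v w w' : Fin 12) (a b cc dd : ℕ)
    (huv : icosahedron.Adj u v)
    (hcn : ∀ t : Fin 12, (t = u ∨ icosahedron.Adj t u) → (t = v ∨ icosahedron.Adj t v) →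
      (t = u ∨ t = v ∨ t = w ∨ t = w'))
    (hua : (u : ℕ) = a) (hvb : (v : ℕ) = b) (hwc : (w : ℕ) = cc) (hwd : ((w' : Fin 12) : ℕ) = dd) :
    k ≤ (Finset.univ.filter (fun z : V => (f z : ℕ) = a)).card
      + (Finset.univ.filter (fun z : V => (f z : ℕ) = b)).card
      + (Finset.univ.filter (fun z : V => (f z : ℕ) = cc)).card
      + (Finset.univ.filter (fun z : V => (f z : ℕ) = dd)).card := by
  classical
  obtain ⟨x, hx⟩ := hsurj u
  obtain ⟨y, hy⟩ := hsurj v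
  have hune : u ≠ v := huv.ne
  have hxyne : x ≠ y := by
    intro h
    exact hune (by rw [← hx, h, hy])
  have hxy : G.Adj x y := (hadj x y).mpr ⟨hxyne, Or.inr (by rw [hx, hy]; exact huv)⟩
  obtain ⟨c0⟩ := hno x y hxy
  have hmem : ∀ {z : V}, z ≠ x → z ≠ y → z ∈ (({x, y} : Set V)ᶜ) := by
    intro z h1 h2
    simp only [Set.mem_compl_iff, Set.mem_insert_iff, Set.mem_singleton_iff]
    rintro (h | h)
    · exact h1 h
    · exact h2 h
  -- every color class contains a common neighbor of x and y
  have key : ∀ i : Fin (k - 2), ∃ z : V, ∃ hz1 : z ≠ x, ∃ hz2 : z ≠ y,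
      G.Adj x z ∧ G.Adj y z ∧ c0 ⟨z, hmem hz1 hz2⟩ = i := by
    by_contra hbad
    push_neg at hbad
    obtain ⟨i, hi⟩ := hbad
    -- build a (k-1)-coloring of G
    have hcol : G.Colorable (k - 1) := by
      rw [colorable_iff_exists_bdd_nat_coloring]
      let φ : V → ℕ := fun z =>
        if hzx : z = x then (i : ℕ)
        else if hzy : z = y then k - 2
        else if c0 ⟨z, hmem hzx hzy⟩ = i ∧ G.Adj x z then k - 2
        else ((c0 ⟨z, hmem hzx hzy⟩ : Fin (k - 2)) : ℕ)
      have hvx : φ x = (i : ℕ) := dif_pos rfl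
      have hvy : φ y = k - 2 := by
        have h1 : y ≠ x := fun h => hxyne h.symm
        exact (dif_neg h1).trans (dif_pos rfl)
      have hv3 : ∀ (z : V) (h1 : z ≠ x) (h2 : z ≠ y),
          (c0 ⟨z, hmem h1 h2⟩ = i ∧ G.Adj x z) → φ z = k - 2 := by
        intro z h1 h2 h3
        exact (dif_neg h1).trans ((dif_neg h2).trans (if_pos h3))
      have hv4 : ∀ (z : V) (h1 : z ≠ x) (h2 : z ≠ y),
          ¬(c0 ⟨z, hmem h1 h2⟩ = i ∧ G.Adj x z) →
          φ z = ((c0 ⟨z, hmem h1 h2⟩ : Fin (k - 2)) : ℕ) := by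
        intro z h1 h2 h3
        exact (dif_neg h1).trans ((dif_neg h2).trans (if_neg h3))
      have hvalid : ∀ {p q : V}, G.Adj p q → φ p ≠ φ q := by
        intro p q hpq heq
        have hne : p ≠ q := hpq.ne
        have hilt : (i : ℕ) < k - 2 := i.isLt
        by_cases hpx : p = x
        · have hqx : q ≠ x := fun h => hne (hpx.trans h.symm)
          rw [hpx, hvx] at heq
          by_cases hqy : q = y
          · rw [hqy, hvy] at heq; omega
          · by_cases hq3 : c0 ⟨q, hmem hqx hqy⟩ = i ∧ G.Adj x q
            · rw [hv3 q hqx hqy hq3] at heq; omega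
            · rw [hv4 q hqx hqy hq3] at heq
              have hAdjxq : G.Adj x q := by rw [← hpx]; exact hpq
              exact hq3 ⟨Fin.val_injective (by omega), hAdjxq⟩
        · by_cases hpy : p = y
          · rw [hpy, hvy] at heq
            by_cases hqx : q = x
            · rw [hqx, hvx] at heq; omega
            · have hqy : q ≠ y := fun h => hne (hpy.trans h.symm)
              by_cases hq3 : c0 ⟨q, hmem hqx hqy⟩ = i ∧ G.Adj x q
              · exact hi q hqx hqy hq3.2 (by rw [← hpy]; exact hpq) hq3.1
              · rw [hv4 q hqx hqy hq3] at heq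
                have := (c0 ⟨q, hmem hqx hqy⟩).isLt
                omega
          · by_cases hp3 : c0 ⟨p, hmem hpx hpy⟩ = i ∧ G.Adj x p
            · rw [hv3 p hpx hpy hp3] at heq
              by_cases hqx : q = x
              · rw [hqx, hvx] at heq; omega
              · by_cases hqy : q = y
                · exact hi p hpx hpy hp3.2 (by rw [← hqy]; exact hpq.symm) hp3.1
                · by_cases hq3 : c0 ⟨q, hmem hqx hqy⟩ = i ∧ G.Adj x q
                  · have hadjind : (G.induce (({x, y} : Set V)ᶜ)).Adj
                        ⟨p, hmem hpx hpy⟩ ⟨q, hmem hqx hqy⟩ := hpq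
                    exact c0.valid hadjind (hp3.1.trans hq3.1.symm)
                  · rw [hv4 q hqx hqy hq3] at heq
                    have := (c0 ⟨q, hmem hqx hqy⟩).isLt
                    omega
            · rw [hv4 p hpx hpy hp3] at heq
              by_cases hqx : q = x
              · rw [hqx, hvx] at heq
                have hAdjxp : G.Adj x p := by rw [← hqx]; exact hpq.symm
                exact hp3 ⟨Fin.val_injective (by omega), hAdjxp⟩
              · by_cases hqy : q = y
                · rw [hqy, hvy] at heq
                  have := (c0 ⟨p, hmem hpx hpy⟩).isLt
                  omega
                · by_cases hq3 : c0 ⟨q, hmem hqx hqy⟩ = i ∧ G.Adj x q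
                  · rw [hv3 q hqx hqy hq3] at heq
                    have := (c0 ⟨p, hmem hpx hpy⟩).isLt
                    omega
                  · rw [hv4 q hqx hqy hq3] at heq
                    have hadjind : (G.induce (({x, y} : Set V)ᶜ)).Adj
                        ⟨p, hmem hpx hpy⟩ ⟨q, hmem hqx hqy⟩ := hpq
                    exact c0.valid hadjind (Fin.val_injective (by omega))
      refine ⟨Coloring.mk φ hvalid, ?_⟩
      intro z
      show φ z < k - 1
      by_cases hzx : z = x
      · rw [hzx, hvx]; omega
      · by_cases hzy : z = y
        · rw [hzy, hvy]; omega
        · by_cases hz3 : c0 ⟨z, hmem hzx hzy⟩ = i ∧ G.Adj x z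
          · rw [hv3 z hzx hzy hz3]; omega
          · rw [hv4 z hzx hzy hz3]
            have := (c0 ⟨z, hmem hzx hzy⟩).isLt
            omega
    have hle := hcol.chromaticNumber_le
    rw [hchrom] at hle
    have : k ≤ k - 1 := by exact_mod_cast hle
    omega
  -- choose representatives
  choose zf hz1 hz2 hA hB hC using key
  set Q : Finset V := Finset.univ.filter
    (fun z => (f z : ℕ) = a ∨ (f z : ℕ) = b ∨ (f z : ℕ) = cc ∨ (f z : ℕ) = dd) with hQ
  have hzfQ : ∀ i : Fin (k - 2), zf i ∈ Q \ {x, y} := by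
    intro i
    have hxz := (hadj x (zf i)).mp (hA i)
    have hyz := (hadj y (zf i)).mp (hB i)
    have h1 : f (zf i) = u ∨ icosahedron.Adj (f (zf i)) u := by
      rcases hxz.2 with h | h
      · exact Or.inl (by rw [← h, hx])
      · rw [hx] at h; exact Or.inr h.symm
    have h2 : f (zf i) = v ∨ icosahedron.Adj (f (zf i)) v := by
      rcases hyz.2 with h | h
      · exact Or.inl (by rw [← h, hy])
      · rw [hy] at h; exact Or.inr h.symm
    have h3 := hcn (f (zf i)) h1 h2
    rw [Finset.mem_sdiff]
    constructor
    · rw [hQ, Finset.mem_filter]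
      refine ⟨Finset.mem_univ _, ?_⟩
      rcases h3 with h | h | h | h
      · exact Or.inl (by rw [h]; exact hua)
      · exact Or.inr (Or.inl (by rw [h]; exact hvb))
      · exact Or.inr (Or.inr (Or.inl (by rw [h]; exact hwc)))
      · exact Or.inr (Or.inr (Or.inr (by rw [h]; exact hwd)))
    · simp only [Finset.mem_insert, Finset.mem_singleton]
      rintro (h | h)
      · exact hz1 i h
      · exact hz2 i h
  have hinj : Set.InjOn zf (Finset.univ : Finset (Fin (k - 2))) := by
    intro i _ j _ hij
    have h1 := hC i
    have h2 := hC j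
    rw [← h1, ← h2]
    congr 1
    exact Subtype.ext hij
  have hcard1 : k - 2 ≤ (Q \ {x, y}).card := by
    have h := Finset.card_le_card_of_injOn zf (fun i _ => hzfQ i) hinj
    rwa [Finset.card_univ, Fintype.card_fin] at h
  have hxQ : x ∈ Q := by
    rw [hQ, Finset.mem_filter]
    exact ⟨Finset.mem_univ _, Or.inl (by rw [hx]; exact hua)⟩
  have hyQ : y ∈ Q := by
    rw [hQ, Finset.mem_filter]
    exact ⟨Finset.mem_univ _, Or.inr (Or.inl (by rw [hy]; exact hvb))⟩
  have hsubQ : ({x, y} : Finset V) ⊆ Q := by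
    intro z hz
    simp only [Finset.mem_insert, Finset.mem_singleton] at hz
    rcases hz with h | h
    · rw [h]; exact hxQ
    · rw [h]; exact hyQ
  have hsd : (Q \ {x, y}).card = Q.card - 2 := by
    rw [Finset.card_sdiff_of_subset hsubQ, Finset.card_pair hxyne]
  have h2Q : 2 ≤ Q.card := by
    have h := Finset.card_le_card hsubQ
    rwa [Finset.card_pair hxyne] at h
  have hsplit : Q.card ≤ (Finset.univ.filter (fun z : V => (f z : ℕ) = a)).card
      + (Finset.univ.filter (fun z : V => (f z : ℕ) = b)).card
      + (Finset.univ.filter (fun z : V => (f z : ℕ) = cc)).card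
      + (Finset.univ.filter (fun z : V => (f z : ℕ) = dd)).card := by
    rw [hQ, Finset.filter_or, Finset.filter_or, Finset.filter_or]
    calc ((Finset.univ.filter (fun z : V => (f z : ℕ) = a)) ∪
          ((Finset.univ.filter (fun z : V => (f z : ℕ) = b)) ∪
           ((Finset.univ.filter (fun z : V => (f z : ℕ) = cc)) ∪
            (Finset.univ.filter (fun z : V => (f z : ℕ) = dd))))).card
        ≤ (Finset.univ.filter (fun z : V => (f z : ℕ) = a)).card +
          ((Finset.univ.filter (fun z : V => (f z : ℕ) = b)) ∪
           ((Finset.univ.filter (fun z : V => (f z : ℕ) = cc)) ∪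
            (Finset.univ.filter (fun z : V => (f z : ℕ) = dd)))).card :=
          Finset.card_union_le _ _
      _ ≤ (Finset.univ.filter (fun z : V => (f z : ℕ) = a)).card +
          ((Finset.univ.filter (fun z : V => (f z : ℕ) = b)).card +
           ((Finset.univ.filter (fun z : V => (f z : ℕ) = cc)) ∪
            (Finset.univ.filter (fun z : V => (f z : ℕ) = dd))).card) := by
          have := Finset.card_union_le
            (Finset.univ.filter (fun z : V => (f z : ℕ) = b))
            ((Finset.univ.filter (fun z : V => (f z : ℕ) = cc)) ∪
             (Finset.univ.filter (fun z : V => (f z : ℕ) = dd)))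
          omega
      _ ≤ (Finset.univ.filter (fun z : V => (f z : ℕ) = a)).card +
          ((Finset.univ.filter (fun z : V => (f z : ℕ) = b)).card +
           ((Finset.univ.filter (fun z : V => (f z : ℕ) = cc)).card +
            (Finset.univ.filter (fun z : V => (f z : ℕ) = dd)).card)) := by
          have := Finset.card_union_le
            (Finset.univ.filter (fun z : V => (f z : ℕ) = cc))
            (Finset.univ.filter (fun z : V => (f z : ℕ) = dd))
          omega
      _ = _ := by ring
  omega

theorem stmt10 {V : Type*} [Fintype V] (G : SimpleGraph V)
    (f : V → Fin 12) (hsurj : Function.Surjective f)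
    (hadj : ∀ u v : V, G.Adj u v ↔ u ≠ v ∧ (f u = f v ∨ icosahedron.Adj (f u) (f v)))
    (hχω : (G.cliqueNum : ℕ∞) < G.chromaticNumber) :
    ∃ x y : V, G.Adj x y ∧
      G.chromaticNumber - 1 ≤ (G.induce (({x, y} : Set V)ᶜ)).chromaticNumber := by
  classical
  by_contra hcon
  push_neg at hcon
  have hfin : G.chromaticNumber ≠ ⊤ :=
    chromaticNumber_ne_top_iff_exists.mpr ⟨_, G.colorable_of_fintype⟩
  set k : ℕ := G.chromaticNumber.toNat with hkdef
  have hk : G.chromaticNumber = (k : ℕ∞) := (ENat.coe_toNat hfin).symm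
  obtain ⟨x0, hx0⟩ := hsurj 0
  obtain ⟨y0, hy0⟩ := hsurj 1
  have hxy0 : G.Adj x0 y0 := by
    refine (hadj x0 y0).mpr ⟨?_, Or.inr (by rw [hx0, hy0]; decide)⟩
    intro h
    have : (0 : Fin 12) = 1 := by rw [← hx0, h, hy0]
    exact absurd this (by decide)
  have hsub1 : G.chromaticNumber - 1 = ((k - 1 : ℕ) : ℕ∞) := by
    rw [hk, ← Nat.cast_one, ← ENat.coe_sub]
  have hk2 : 2 ≤ k := by
    by_contra hlt
    have h0 : ((k - 1 : ℕ) : ℕ∞) = 0 := by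
      have h1 : k - 1 = 0 := by omega
      rw [h1, Nat.cast_zero]
    have h2 := hcon x0 y0 hxy0
    rw [hsub1, h0] at h2
    simp at h2
  have hno : ∀ x y : V, G.Adj x y →
      (G.induce (({x, y} : Set V)ᶜ)).Colorable (k - 2) := by
    intro x y hxy
    have hlt := hcon x y hxy
    rw [hsub1] at hlt
    have hne : (G.induce (({x, y} : Set V)ᶜ)).chromaticNumber ≠ ⊤ := ne_top_of_lt hlt
    set m : ℕ := (G.induce (({x, y} : Set V)ᶜ)).chromaticNumber.toNat with hmdef
    have hm : ((m : ℕ) : ℕ∞) = (G.induce (({x, y} : Set V)ᶜ)).chromaticNumber :=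
      ENat.coe_toNat hne
    rw [← hm] at hlt
    have hltn : m < k - 1 := by exact_mod_cast hlt
    have hcolm : (G.induce (({x, y} : Set V)ᶜ)).Colorable m :=
      chromaticNumber_le_iff_colorable.mp (le_of_eq hm.symm)
    exact hcolm.mono (by omega)
  have hcard := count_bound G f hadj k x0 y0 (hno x0 y0 hxy0)
  have hfib : Fintype.card V =
      ∑ j ∈ Finset.range 12, (Finset.univ.filter (fun z : V => (f z : ℕ) = j)).card := by
    rw [← Finset.card_univ]
    exact Finset.card_eq_sum_card_fiberwise (fun z _ => Finset.mem_range.mpr (f z).isLt)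
  simp only [Finset.sum_range_succ, Finset.sum_range_zero] at hfib
  have e0 := star_ineq G f hsurj hadj k hk2 hk hno 0 1 3 9 0 1 3 9 (by decide) (by decide) (by decide) (by decide) (by decide) (by decide)
  have e1 := star_ineq G f hsurj hadj k hk2 hk hno 0 3 1 5 0 3 1 5 (by decide) (by decide) (by decide) (by decide) (by decide) (by decide)
  have e2 := star_ineq G f hsurj hadj k hk2 hk hno 0 5 3 7 0 5 3 7 (by decide) (by decide) (by decide) (by decide) (by decide) (by decide)
  have e3 := star_ineq G f hsurj hadj k hk2 hk hno 0 7 5 9 0 7 5 9 (by decide) (by decide) (by decide) (by decide) (by decide) (by decide)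
  have e4 := star_ineq G f hsurj hadj k hk2 hk hno 0 9 1 7 0 9 1 7 (by decide) (by decide) (by decide) (by decide) (by decide) (by decide)
  have e5 := star_ineq G f hsurj hadj k hk2 hk hno 1 2 3 10 1 2 3 10 (by decide) (by decide) (by decide) (by decide) (by decide) (by decide)
  have e6 := star_ineq G f hsurj hadj k hk2 hk hno 1 3 0 2 1 3 0 2 (by decide) (by decide) (by decide) (by decide) (by decide) (by decide)
  have e7 := star_ineq G f hsurj hadj k hk2 hk hno 1 9 0 10 1 9 0 10 (by decide) (by decide) (by decide) (by decide) (by decide) (by decide)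
  have e8 := star_ineq G f hsurj hadj k hk2 hk hno 1 10 2 9 1 10 2 9 (by decide) (by decide) (by decide) (by decide) (by decide) (by decide)
  have e9 := star_ineq G f hsurj hadj k hk2 hk hno 2 3 1 4 2 3 1 4 (by decide) (by decide) (by decide) (by decide) (by decide) (by decide)
  have e10 := star_ineq G f hsurj hadj k hk2 hk hno 2 4 3 11 2 4 3 11 (by decide) (by decide) (by decide) (by decide) (by decide) (by decide)
  have e11 := star_ineq G f hsurj hadj k hk2 hk hno 2 10 1 11 2 10 1 11 (by decide) (by decide) (by decide) (by decide) (by decide) (by decide)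
  have e12 := star_ineq G f hsurj hadj k hk2 hk hno 2 11 4 10 2 11 4 10 (by decide) (by decide) (by decide) (by decide) (by decide) (by decide)
  have e13 := star_ineq G f hsurj hadj k hk2 hk hno 3 4 2 5 3 4 2 5 (by decide) (by decide) (by decide) (by decide) (by decide) (by decide)
  have e14 := star_ineq G f hsurj hadj k hk2 hk hno 3 5 0 4 3 5 0 4 (by decide) (by decide) (by decide) (by decide) (by decide) (by decide)
  have e15 := star_ineq G f hsurj hadj k hk2 hk hno 4 5 3 6 4 5 3 6 (by decide) (by decide) (by decide) (by decide) (by decide) (by decide)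
  have e16 := star_ineq G f hsurj hadj k hk2 hk hno 4 6 5 11 4 6 5 11 (by decide) (by decide) (by decide) (by decide) (by decide) (by decide)
  have e17 := star_ineq G f hsurj hadj k hk2 hk hno 4 11 2 6 4 11 2 6 (by decide) (by decide) (by decide) (by decide) (by decide) (by decide)
  have e18 := star_ineq G f hsurj hadj k hk2 hk hno 5 6 4 7 5 6 4 7 (by decide) (by decide) (by decide) (by decide) (by decide) (by decide)
  have e19 := star_ineq G f hsurj hadj k hk2 hk hno 5 7 0 6 5 7 0 6 (by decide) (by decide) (by decide) (by decide) (by decide) (by decide)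
  have e20 := star_ineq G f hsurj hadj k hk2 hk hno 6 7 5 8 6 7 5 8 (by decide) (by decide) (by decide) (by decide) (by decide) (by decide)
  have e21 := star_ineq G f hsurj hadj k hk2 hk hno 6 8 7 11 6 8 7 11 (by decide) (by decide) (by decide) (by decide) (by decide) (by decide)
  have e22 := star_ineq G f hsurj hadj k hk2 hk hno 6 11 4 8 6 11 4 8 (by decide) (by decide) (by decide) (by decide) (by decide) (by decide)
  have e23 := star_ineq G f hsurj hadj k hk2 hk hno 7 8 6 9 7 8 6 9 (by decide) (by decide) (by decide) (by decide) (by decide) (by decide)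
  have e24 := star_ineq G f hsurj hadj k hk2 hk hno 7 9 0 8 7 9 0 8 (by decide) (by decide) (by decide) (by decide) (by decide) (by decide)
  have e25 := star_ineq G f hsurj hadj k hk2 hk hno 8 9 7 10 8 9 7 10 (by decide) (by decide) (by decide) (by decide) (by decide) (by decide)
  have e26 := star_ineq G f hsurj hadj k hk2 hk hno 8 10 9 11 8 10 9 11 (by decide) (by decide) (by decide) (by decide) (by decide) (by decide)
  have e27 := star_ineq G f hsurj hadj k hk2 hk hno 8 11 6 10 8 11 6 10 (by decide) (by decide) (by decide) (by decide) (by decide) (by decide)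
  have e28 := star_ineq G f hsurj hadj k hk2 hk hno 9 10 1 8 9 10 1 8 (by decide) (by decide) (by decide) (by decide) (by decide) (by decide)
  have e29 := star_ineq G f hsurj hadj k hk2 hk hno 10 11 2 8 10 11 2 8 (by decide) (by decide) (by decide) (by decide) (by decide) (by decide)
  omega
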